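/- arXiv:1309.0680 — 2 statements merged into one kernel-verified Lean document; each statement's English description precedes it below -/
import Mathlib

section
/- Let G be a graph with a 2-join (X1,X2) with split (X1,X2,A1,B1,A2,B2), and let P be an induced path of G whose two end-vertices both lie in X2. Then either (1) there exist a ∈ A1, b ∈ B1 such that V(P) ⊆ X2 ∪ {a,b}, and moreover if both a,b belong to V(P) then a and b are non-adjacent; or (2) P can be written as c-...-a2-a-...-b-b2-...-c' where a ∈ A1, b ∈ B1, a2 ∈ A2, b2 ∈ B2, the subpaths from c to a2 and from b2 to c' lie entirely in X2, and the subpath from a to b lies entirely in X1. -/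
open SimpleGraph

universe u

namespace BSP

variable {V : Type*}

/-- A walk is induced: any two adjacent vertices of its support are consecutive on it. -/
def IsInducedWalk (G : SimpleGraph V) {u v : V} (p : G.Walk u v) : Prop :=
  ∀ x ∈ p.support, ∀ y ∈ p.support, G.Adj x y → s(x, y) ∈ p.edges

/-- An induced path. -/
def IsInducedPath (G : SimpleGraph V) {u v : V} (p : G.Walk u v) : Prop :=
  p.IsPath ∧ IsInducedWalk G p

/-- An induced cycle. -/
def IsInducedCycle (G : SimpleGraph V) {u : V} (p : G.Walk u u) : Prop :=
  p.IsCycle ∧ IsInducedWalk G p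

/-- `G` has an odd hole: an induced odd cycle of length at least 5. -/
def HasOddHole (G : SimpleGraph V) : Prop :=
  ∃ (u : V) (p : G.Walk u u), IsInducedCycle G p ∧ Odd p.length ∧ 5 ≤ p.length

/-- A graph is Berge if neither it nor its complement has an odd hole. -/
def Berge (G : SimpleGraph V) : Prop := ¬ HasOddHole G ∧ ¬ HasOddHole Gᶜ

/-- `x` is an interior vertex of the walk `p`. -/
def Interior {G : SimpleGraph V} {u v : V} (p : G.Walk u v) (x : V) : Prop :=
  x ∈ p.support ∧ x ≠ u ∧ x ≠ v

/-- A skew partition `(A, B)` of `G`. -/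
def IsSkewPartition (G : SimpleGraph V) (A B : Set V) : Prop :=
  A.Nonempty ∧ B.Nonempty ∧ Disjoint A B ∧ A ∪ B = Set.univ ∧
  ¬ (G.induce A).Connected ∧ ¬ ((Gᶜ).induce B).Connected

/-- A balanced skew partition. -/
def IsBalancedSkewPartition (G : SimpleGraph V) (A B : Set V) : Prop :=
  IsSkewPartition G A B ∧
  (∀ (x y : V) (p : G.Walk x y), IsInducedPath G p → 2 ≤ p.length →
     x ∈ B → y ∈ B → (∀ z, Interior p z → z ∈ A) → Even p.length) ∧
  (∀ (x y : V) (q : (Gᶜ).Walk x y), IsInducedPath Gᶜ q → 2 ≤ q.length →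
     x ∈ A → y ∈ A → (∀ z, Interior q z → z ∈ B) → Even q.length)

def HasBalancedSkewPartition (G : SimpleGraph V) : Prop :=
  ∃ A B : Set V, IsBalancedSkewPartition G A B

def IsSkewCutset (G : SimpleGraph V) (B : Set V) : Prop :=
  IsSkewPartition G Bᶜ B

def IsBalancedSkewCutset (G : SimpleGraph V) (B : Set V) : Prop :=
  IsBalancedSkewPartition G Bᶜ B

/-- `C` is a cutset of `G`. -/
def IsCutset (G : SimpleGraph V) (C : Set V) : Prop :=
  ¬ (G.induce (Cᶜ : Set V)).Connected

/-- A star: a set with a vertex adjacent to all the others in it. -/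
def IsStar (G : SimpleGraph V) (B : Set V) : Prop :=
  ∃ x ∈ B, ∀ y ∈ B, y ≠ x → G.Adj x y

def HasStarCutset (G : SimpleGraph V) : Prop :=
  ∃ B : Set V, IsStar G B ∧ IsCutset G B

/-- A 2-join of `G` with split `(X1, X2, A1, B1, A2, B2)`. -/
def IsTwoJoinSplit (G : SimpleGraph V) (X1 X2 A1 B1 A2 B2 : Set V) : Prop :=
  Disjoint X1 X2 ∧ X1 ∪ X2 = Set.univ ∧
  A1 ⊆ X1 ∧ B1 ⊆ X1 ∧ A2 ⊆ X2 ∧ B2 ⊆ X2 ∧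
  Disjoint A1 B1 ∧ Disjoint A2 B2 ∧
  A1.Nonempty ∧ B1.Nonempty ∧ A2.Nonempty ∧ B2.Nonempty ∧
  (∀ a1 ∈ A1, ∀ a2 ∈ A2, G.Adj a1 a2) ∧
  (∀ b1 ∈ B1, ∀ b2 ∈ B2, G.Adj b1 b2) ∧
  (∀ x ∈ X1, ∀ y ∈ X2, G.Adj x y → (x ∈ A1 ∧ y ∈ A2) ∨ (x ∈ B1 ∧ y ∈ B2))

/-- Reachability inside a set of vertices. -/
def ReachIn (G : SimpleGraph V) (S : Set V) (u v : V) : Prop :=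
  ∃ p : G.Walk u v, ∀ x ∈ p.support, x ∈ S

/-- Every component of `G[X]` meets both `A` and `B`. -/
def SideConnected (G : SimpleGraph V) (X A B : Set V) : Prop :=
  ∀ v ∈ X, (∃ a ∈ A, ReachIn G X v a) ∧ (∃ b ∈ B, ReachIn G X v b)

def IsConnectedTwoJoin (G : SimpleGraph V) (X1 X2 A1 B1 A2 B2 : Set V) : Prop :=
  IsTwoJoinSplit G X1 X2 A1 B1 A2 B2 ∧
  SideConnected G X1 A1 B1 ∧ SideConnected G X2 A2 B2

/-- `X` has at least 3 vertices and is not a path of length 2 from `A` to `B`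
with interior in `X \ (A ∪ B)`. -/
def SideSubstantial (G : SimpleGraph V) (X A B : Set V) : Prop :=
  3 ≤ X.ncard ∧
  ¬ ∃ a ∈ A, ∃ b ∈ B, ∃ c ∈ X \ (A ∪ B),
      X = {a, c, b} ∧ G.Adj a c ∧ G.Adj c b ∧ ¬ G.Adj a b

def IsSubstantialTwoJoin (G : SimpleGraph V) (X1 X2 A1 B1 A2 B2 : Set V) : Prop :=
  IsTwoJoinSplit G X1 X2 A1 B1 A2 B2 ∧
  SideSubstantial G X1 A1 B1 ∧ SideSubstantial G X2 A2 B2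

def IsProperTwoJoin (G : SimpleGraph V) (X1 X2 A1 B1 A2 B2 : Set V) : Prop :=
  IsConnectedTwoJoin G X1 X2 A1 B1 A2 B2 ∧
  SideSubstantial G X1 A1 B1 ∧ SideSubstantial G X2 A2 B2

/-- A degenerate 2-join. -/
def IsDegenerate (G : SimpleGraph V) (X1 X2 A1 B1 A2 B2 : Set V) : Prop :=
  (∃ v ∈ A1, ∀ w ∈ X1 \ A1, ¬ G.Adj v w) ∨
  (∃ v ∈ B1, ∀ w ∈ X1 \ B1, ¬ G.Adj v w) ∨
  (∃ v ∈ A2, ∀ w ∈ X2 \ A2, ¬ G.Adj v w) ∨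
  (∃ v ∈ B2, ∀ w ∈ X2 \ B2, ¬ G.Adj v w) ∨
  IsSkewCutset G (A1 ∪ A2) ∨ IsSkewCutset G (B1 ∪ B2) ∨
  ¬ (SideConnected G X1 A1 B1 ∧ SideConnected G X2 A2 B2) ∨
  (∃ v ∈ A1, ∀ w ∈ B1, G.Adj v w) ∨ (∃ v ∈ B1, ∀ w ∈ A1, G.Adj v w) ∨
  (∃ v ∈ A2, ∀ w ∈ B2, G.Adj v w) ∨ (∃ v ∈ B2, ∀ w ∈ A2, G.Adj v w) ∨
  (∃ v ∈ X1 \ (A1 ∪ B1), ∀ w ∈ A1 ∪ B1, G.Adj v w) ∨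
  (∃ v ∈ X2 \ (A2 ∪ B2), ∀ w ∈ A2 ∪ B2, G.Adj v w)

/-- An induced path from `A` to `B` with no interior vertex in `A ∪ B`. -/
def CrossPath (G : SimpleGraph V) (A B : Set V) {u v : V} (p : G.Walk u v) : Prop :=
  IsInducedPath G p ∧ u ∈ A ∧ v ∈ B ∧ ∀ x, Interior p x → x ∉ A ∪ B

/-- An induced path of length at least 2 with both ends in `S` and no interior vertex in `S`. -/
def OutgoingPath (G : SimpleGraph V) (S : Set V) {u v : V} (p : G.Walk u v) : Prop :=
  IsInducedPath G p ∧ 2 ≤ p.length ∧ u ∈ S ∧ v ∈ S ∧ ∀ x, Interior p x → x ∉ S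

def claw : SimpleGraph (Fin 1 ⊕ Fin 3) := completeBipartiteGraph (Fin 1) (Fin 3)

def diamond : SimpleGraph (Fin 4) := (⊤ : SimpleGraph (Fin 4)).deleteEdges {s(0, 1)}

def ClawFree (G : SimpleGraph V) : Prop := IsEmpty (claw ↪g G)

def DiamondFree (G : SimpleGraph V) : Prop := IsEmpty (diamond ↪g G)

def IsLineGraphOfBipartite {V : Type u} (G : SimpleGraph V) : Prop :=
  ∃ (W : Type u) (H : SimpleGraph W), H.Colorable 2 ∧ Nonempty (G ≃g H.lineGraph)

/-- Double split graph structure. -/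
structure IsDoubleSplit (G : SimpleGraph V) (m n : ℕ)
    (a b : Fin m → V) (c d : Fin n → V) : Prop where
  hm : 2 ≤ m
  hn : 2 ≤ n
  inj : Function.Injective (Sum.elim (Sum.elim a b) (Sum.elim c d))
  cover : Set.range a ∪ Set.range b ∪ Set.range c ∪ Set.range d = Set.univ
  hab : ∀ i, G.Adj (a i) (b i)
  habne : ∀ i i', i ≠ i' →
    ¬ G.Adj (a i) (a i') ∧ ¬ G.Adj (a i) (b i') ∧ ¬ G.Adj (b i) (b i')
  hcd : ∀ j, ¬ G.Adj (c j) (d j)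
  hcdall : ∀ j j', j ≠ j' →
    G.Adj (c j) (c j') ∧ G.Adj (c j) (d j') ∧ G.Adj (d j) (d j')
  cross : ∀ i j,
    (G.Adj (a i) (c j) ∧ G.Adj (b i) (d j) ∧ ¬ G.Adj (a i) (d j) ∧ ¬ G.Adj (b i) (c j)) ∨
    (G.Adj (a i) (d j) ∧ G.Adj (b i) (c j) ∧ ¬ G.Adj (a i) (c j) ∧ ¬ G.Adj (b i) (d j))

/-- Path-double split graph structure. -/
structure IsPathDoubleSplit (G : SimpleGraph V) (m n : ℕ)
    (a b : Fin m → V) (c d : Fin n → V) (E : Set V) : Prop where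
  hm : 2 ≤ m
  hn : 2 ≤ n
  inj : Function.Injective (Sum.elim (Sum.elim a b) (Sum.elim c d))
  notinE : ∀ i, a i ∉ E ∧ b i ∉ E
  notinE' : ∀ j, c j ∉ E ∧ d j ∉ E
  cover : Set.range a ∪ Set.range b ∪ Set.range c ∪ Set.range d ∪ E = Set.univ
  hE : ∀ v ∈ E, (G.neighborSet v).ncard = 2 ∧
    ∃ (i : Fin m) (p : G.Walk (a i) (b i)), IsInducedPath G p ∧ Odd p.length ∧
      (∀ x, Interior p x → x ∈ E) ∧ v ∈ p.support
  hpath : ∀ i, ∃! p : G.Walk (a i) (b i),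
    IsInducedPath G p ∧ Odd p.length ∧ (∀ x, Interior p x → x ∈ E)
  habne : ∀ i i', i ≠ i' →
    ¬ G.Adj (a i) (a i') ∧ ¬ G.Adj (a i) (b i') ∧ ¬ G.Adj (b i) (b i')
  hcd : ∀ j, ¬ G.Adj (c j) (d j)
  hcdall : ∀ j j', j ≠ j' →
    G.Adj (c j) (c j') ∧ G.Adj (c j) (d j') ∧ G.Adj (d j) (d j')
  cross : ∀ i j,
    (G.Adj (a i) (c j) ∧ G.Adj (b i) (d j) ∧ ¬ G.Adj (a i) (d j) ∧ ¬ G.Adj (b i) (c j)) ∨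
    (G.Adj (a i) (d j) ∧ G.Adj (b i) (c j) ∧ ¬ G.Adj (a i) (c j) ∧ ¬ G.Adj (b i) (d j))

/-- Path-cobipartite graph. -/
def IsPathCobipartite (G : SimpleGraph V) : Prop :=
  Berge G ∧ ∃ A B P : Set V,
    Disjoint A B ∧ Disjoint A P ∧ Disjoint B P ∧ A ∪ B ∪ P = Set.univ ∧
    A.Nonempty ∧ B.Nonempty ∧ G.IsClique A ∧ G.IsClique B ∧
    ∀ v ∈ P, (G.neighborSet v).ncard = 2 ∧
      ∃ a ∈ A, ∃ b ∈ B, ∃ p : G.Walk a b, IsInducedPath G p ∧ Odd p.length ∧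
        Interior p v ∧ (∀ x, Interior p x → x ∈ P) ∧
        (∀ w, G.Adj a w → w ∈ A ∪ P) ∧ (∀ w, G.Adj b w → w ∈ B ∪ P) ∧
        (∀ (a' b' : V), a' ∈ A → b' ∈ B → ∀ p' : G.Walk a' b',
          IsInducedPath G p' → Odd p'.length → Interior p' v →
          (∀ x, Interior p' x → x ∈ P) →
          {x | x ∈ p'.support} = {x | x ∈ p.support})

/-- `X` induces a path of `G` with one end in `A`, the other in `B` and interior
outside `A ∪ B`. -/
def PathSideOn (G : SimpleGraph V) (X A B : Set V) : Prop :=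
  ∃ a ∈ A, ∃ b ∈ B, ∃ p : G.Walk a b, IsInducedPath G p ∧
    {x | x ∈ p.support} = X ∧ ∀ x, Interior p x → x ∉ A ∪ B

/-- The block of a 2-join: keep the side `X` (with attachments `A`, `B`) and replace the
other side by a path `p_0, …, p_k`, `p_0` complete to `A` and `p_k` complete to `B`. -/
def blockGraph (G : SimpleGraph V) (X A B : Set V) (k : ℕ) :
    SimpleGraph (↥X ⊕ Fin (k + 1)) where
  Adj x y :=
    match x, y with
    | Sum.inl u, Sum.inl v => G.Adj u v
    | Sum.inl u, Sum.inr i => ((i : ℕ) = 0 ∧ (u : V) ∈ A) ∨ ((i : ℕ) = k ∧ (u : V) ∈ B)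
    | Sum.inr i, Sum.inl u => ((i : ℕ) = 0 ∧ (u : V) ∈ A) ∨ ((i : ℕ) = k ∧ (u : V) ∈ B)
    | Sum.inr i, Sum.inr j => (i : ℕ) + 1 = (j : ℕ) ∨ (j : ℕ) + 1 = (i : ℕ)
  symm := by
    constructor
    rintro (u | i) (v | j) h
    · exact h.symm
    · exact h
    · exact h
    · omega
  loopless := by
    constructor
    rintro (u | i) h
    · exact G.loopless.irrefl _ h
    · omega

/-- The graph `G'` obtained from a Bienstock graph `G` by adding two vertices
(`Sum.inr false` and `Sum.inr true`), each adjacent exactly to `u` and `s`. -/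
def bienstockExt (G : SimpleGraph V) (u s : V) : SimpleGraph (V ⊕ Bool) where
  Adj x y :=
    match x, y with
    | Sum.inl p, Sum.inl q => G.Adj p q
    | Sum.inl p, Sum.inr _ => p = u ∨ p = s
    | Sum.inr _, Sum.inl q => q = u ∨ q = s
    | Sum.inr _, Sum.inr _ => False
  symm := by
    constructor
    rintro (p | i) (q | j) h
    · exact h.symm
    · exact h
    · exact h
    · exact h
  loopless := by
    constructor
    rintro (p | i) h
    · exact G.loopless.irrefl _ h
    · exact h

end BSP

open SimpleGraph
namespace PWX
variable {V : Type*} {G : SimpleGraph V}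

lemma walk_split {u v : V} (p : G.Walk u v) :
    ∀ i, i ≤ p.length → ∃ (w : V) (q : G.Walk u w) (r : G.Walk w v),
      p = q.append r ∧ q.length = i ∧
      (∀ k, q.getVert k = p.getVert (min k i)) ∧ (∀ k, r.getVert k = p.getVert (i + k)) := by
  induction p with
  | nil =>
    intro i hi
    have : i = 0 := by simpa using hi
    subst this
    exact ⟨_, .nil, .nil, rfl, rfl, fun k => rfl, fun k => rfl⟩
  | @cons u u' v h q ih =>
    intro i hi
    match i with
    | 0 =>
      refine ⟨u, .nil, .cons h q, rfl, rfl, fun k => ?_, fun k => by simp⟩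
      have : k ⊓ 0 = 0 := Nat.min_zero k
      rw [this, Walk.getVert_zero]
      rfl
    | j + 1 =>
      obtain ⟨w, q', r, heq, hlen, hq', hr⟩ := ih j (by simpa using hi)
      refine ⟨w, .cons h q', r, ?_, ?_, ?_, ?_⟩
      · rw [Walk.cons_append, ← heq]
      · simp [hlen]
      · intro k
        match k with
        | 0 => simp
        | k + 1 =>
          rw [Walk.getVert_cons_succ, hq', Nat.succ_min_succ, Walk.getVert_cons_succ]
      · intro k
        have : j + 1 + k = (j + k) + 1 := by omega
        rw [this, Walk.getVert_cons_succ, hr]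

lemma walk_peel {w v : V} (r : G.Walk w v) (hr : 0 < r.length) :
    ∃ (x : V) (h : G.Adj w x) (q : G.Walk x v), r = Walk.cons h q ∧
      ∀ k, q.getVert k = r.getVert (k + 1) := by
  cases r with
  | nil => simp at hr
  | cons h q => exact ⟨_, h, q, rfl, fun k => (Walk.getVert_cons_succ q h).symm⟩

lemma edge_idx {u v x y : V} (p : G.Walk u v) (hxy : s(x, y) ∈ p.edges) :
    ∃ k < p.length, (p.getVert k = x ∧ p.getVert (k + 1) = y) ∨
      (p.getVert k = y ∧ p.getVert (k + 1) = x) := by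
  induction p with
  | nil => simp at hxy
  | @cons u u' v h q ih =>
    rw [Walk.edges_cons, List.mem_cons] at hxy
    rcases hxy with hxy | hxy
    · refine ⟨0, by simp, ?_⟩
      rw [Sym2.eq_iff] at hxy
      rcases hxy with ⟨h1, h2⟩ | ⟨h1, h2⟩
      · exact Or.inl ⟨by simpa using h1.symm, by simpa [Walk.getVert_cons_succ] using h2.symm⟩
      · exact Or.inr ⟨by simpa using h2.symm, by simpa [Walk.getVert_cons_succ] using h1.symm⟩
    · obtain ⟨k, hk, hc⟩ := ih hxy
      exact ⟨k + 1, by simpa using Nat.succ_lt_succ hk,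
        by simpa [Walk.getVert_cons_succ] using hc⟩

lemma getVert_inj {u v : V} {p : G.Walk u v} (hp : p.IsPath) :
    ∀ i j, i ≤ p.length → j ≤ p.length → p.getVert i = p.getVert j → i = j := by
  induction p with
  | nil => intro i j hi hj _; simp at hi hj; omega
  | @cons u u' v h q ih =>
    rw [Walk.cons_isPath_iff] at hp
    intro i j hi hj heq
    match i, j with
    | 0, 0 => rfl
    | 0, j + 1 =>
      exfalso
      rw [Walk.getVert_zero, Walk.getVert_cons_succ] at heq
      exact hp.2 (heq ▸ Walk.mem_support_iff_exists_getVert.mpr ⟨j, rfl, by simpa using hj⟩)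
    | i + 1, 0 =>
      exfalso
      rw [Walk.getVert_zero, Walk.getVert_cons_succ] at heq
      exact hp.2 (heq ▸ Walk.mem_support_iff_exists_getVert.mpr ⟨i, rfl, by simpa using hi⟩)
    | i + 1, j + 1 =>
      rw [Walk.getVert_cons_succ, Walk.getVert_cons_succ] at heq
      have := ih hp.1 i j (by simpa using hi) (by simpa using hj) heq
      omega

lemma consec {u v : V} {p : G.Walk u v} (hp : BSP.IsInducedPath G p)
    {i j : ℕ} (hi : i ≤ p.length) (hj : j ≤ p.length)
    (hadj : G.Adj (p.getVert i) (p.getVert j)) : i + 1 = j ∨ j + 1 = i := by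
  have hmi : p.getVert i ∈ p.support := Walk.mem_support_iff_exists_getVert.mpr ⟨i, rfl, hi⟩
  have hmj : p.getVert j ∈ p.support := Walk.mem_support_iff_exists_getVert.mpr ⟨j, rfl, hj⟩
  obtain ⟨k, hk, hc⟩ := edge_idx p (hp.2 _ hmi _ hmj hadj)
  rcases hc with ⟨h1, h2⟩ | ⟨h1, h2⟩
  · have e1 := getVert_inj hp.1 k i (by omega) hi h1
    have e2 := getVert_inj hp.1 (k + 1) j (by omega) hj h2
    omega
  · have e1 := getVert_inj hp.1 k j (by omega) hj h1
    have e2 := getVert_inj hp.1 (k + 1) i (by omega) hi h2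
    omega

lemma rev_decomp {u a2 a b b2 v : V} (q1 : G.Walk u a2) (h1 : G.Adj a2 a)
    (q2 : G.Walk a b) (h2 : G.Adj b b2) (q3 : G.Walk b2 v) :
    (q1.append (Walk.cons h1 (q2.append (Walk.cons h2 q3)))).reverse
      = q3.reverse.append (Walk.cons h2.symm (q2.reverse.append
          (Walk.cons h1.symm q1.reverse))) := by
  simp only [Walk.reverse_append, Walk.reverse_cons, Walk.concat_eq_append]
  simp only [← Walk.append_assoc, Walk.cons_append, Walk.nil_append]

lemma twoJoin_swap {X1 X2 A1 B1 A2 B2 : Set V}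
    (hJ : BSP.IsTwoJoinSplit G X1 X2 A1 B1 A2 B2) :
    BSP.IsTwoJoinSplit G X1 X2 B1 A1 B2 A2 := by
  obtain ⟨h1, h2, h3, h4, h5, h6, h7, h8, h9, h10, h11, h12, h13, h14, h15⟩ := hJ
  exact ⟨h1, h2, h4, h3, h6, h5, h7.symm, h8.symm, h10, h9, h12, h11, h14, h13,
    fun x hx y hy hadj => (h15 x hx y hy hadj).symm⟩

lemma exists_min {P : ℕ → Prop} (h : ∃ m, P m) :
    ∃ m, P m ∧ ∀ m', m' < m → ¬ P m' := by
  classical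
  exact ⟨Nat.find h, Nat.find_spec h, fun m' hm' => Nat.find_min h hm'⟩

lemma sideA {X1 X2 A1 B1 A2 B2 : Set V}
    (hJ : BSP.IsTwoJoinSplit G X1 X2 A1 B1 A2 B2)
    {u v : V} (hu : u ∈ X2) (hv : v ∈ X2)
    (p : G.Walk u v) (hp : BSP.IsInducedPath G p)
    (i0 : ℕ) (hi0 : i0 ≤ p.length)
    (hmin : ∀ m, m < i0 → p.getVert m ∈ X2)
    (hs : p.getVert (i0 - 1) ∈ A2) (hx : p.getVert i0 ∈ A1) :
    (∃ a ∈ A1, ∃ b ∈ B1, (∀ x ∈ p.support, x ∈ X2 ∪ {a, b}) ∧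
        (a ∈ p.support → b ∈ p.support → ¬ G.Adj a b)) ∨
    (∃ a ∈ A1, ∃ b ∈ B1, ∃ a2 ∈ A2, ∃ b2 ∈ B2,
      ∃ (q1 : G.Walk u a2) (h1 : G.Adj a2 a) (q2 : G.Walk a b) (h2 : G.Adj b b2)
        (q3 : G.Walk b2 v),
        p = q1.append (SimpleGraph.Walk.cons h1 (q2.append (SimpleGraph.Walk.cons h2 q3))) ∧
        (∀ x ∈ q1.support, x ∈ X2) ∧ (∀ x ∈ q2.support, x ∈ X1) ∧
        (∀ x ∈ q3.support, x ∈ X2)) := by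
  classical
  obtain ⟨hdis, hcov, hA1X, hB1X, hA2X, hB2X, hAB1, hAB2, -, hB1ne, -, -, hadjA, hadjB,
    hcross⟩ := hJ
  have htot : ∀ x : V, x ∉ X2 → x ∈ X1 := by
    intro x hx2
    have hm : x ∈ X1 ∪ X2 := hcov ▸ Set.mem_univ x
    rw [Set.mem_union] at hm
    tauto
  have hX1n2 : ∀ {x : V}, x ∈ X1 → x ∉ X2 := fun hx1 hx2 => Set.disjoint_left.mp hdis hx1 hx2
  have hgu : p.getVert 0 = u := p.getVert_zero
  have hgv : p.getVert p.length = v := p.getVert_length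
  have hcons : ∀ {i j : ℕ}, i ≤ p.length → j ≤ p.length →
      G.Adj (p.getVert i) (p.getVert j) → i + 1 = j ∨ j + 1 = i :=
    fun hi hj h => consec hp hi hj h
  have hi0pos : 1 ≤ i0 := by
    by_contra hc
    have h0 : i0 = 0 := by omega
    rw [h0, hgu] at hx
    exact hX1n2 (hA1X hx) hu
  have hi0lt : i0 < p.length := by
    rcases eq_or_lt_of_le hi0 with h | h
    · exfalso; rw [h, hgv] at hx; exact hX1n2 (hA1X hx) hv
    · exact h
  have hexit : ∀ m, m + 1 ≤ p.length → p.getVert m ∈ X1 → p.getVert (m + 1) ∈ X2 →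
      (p.getVert m ∈ A1 ∧ p.getVert (m + 1) ∈ A2) ∨
      (p.getVert m ∈ B1 ∧ p.getVert (m + 1) ∈ B2) := by
    intro m hm h1 h2
    exact hcross _ h1 _ h2 (p.adj_getVert_succ (by omega))
  have hentry : ∀ m, m ≤ p.length → p.getVert m ∈ X1 → p.getVert (m - 1) ∈ X2 →
      (p.getVert m ∈ A1 ∧ p.getVert (m - 1) ∈ A2) ∨
      (p.getVert m ∈ B1 ∧ p.getVert (m - 1) ∈ B2) := by
    intro m hm h1 h2
    have hm0 : 1 ≤ m := by
      by_contra hc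
      have h0 : m = 0 := by omega
      rw [h0, hgu] at h1
      exact hX1n2 h1 hu
    have hadj : G.Adj (p.getVert (m - 1)) (p.getVert m) := by
      have := p.adj_getVert_succ (i := m - 1) (by omega)
      rwa [show m - 1 + 1 = m by omega] at this
    exact hcross _ h1 _ h2 hadj.symm
  have honlyA1 : ∀ j, j ≤ p.length → p.getVert j ∈ A1 → j = i0 := by
    intro j hj hjA
    have hadj : G.Adj (p.getVert j) (p.getVert (i0 - 1)) := hadjA _ hjA _ hs
    rcases hcons hj (by omega) hadj with h | h
    · exfalso
      have hlt : j < i0 := by omega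
      exact hX1n2 (hA1X hjA) (hmin j hlt)
    · omega
  have hEex : ∃ m, i0 < m ∧ m ≤ p.length ∧ p.getVert m ∈ X2 :=
    ⟨p.length, hi0lt, le_refl _, by rwa [hgv]⟩
  obtain ⟨e, ⟨hei0, hen, heX2⟩, hemin⟩ := exists_min hEex
  have hrun : ∀ m, i0 ≤ m → m < e → p.getVert m ∈ X1 := by
    intro m h1 h2
    rcases eq_or_lt_of_le h1 with h | h1'
    · rw [← h]; exact hA1X hx
    · exact htot _ (fun hX2 => hemin m h2 ⟨h1', by omega, hX2⟩)
  have hrun1 : p.getVert (e - 1) ∈ X1 := hrun (e - 1) (by omega) (by omega)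
  have hee : e - 1 + 1 = e := by omega
  have hexit_e := hexit (e - 1) (by omega) hrun1 (by rwa [hee])
  rw [hee] at hexit_e
  rcases hexit_e with ⟨heA1, heA2⟩ | ⟨heB1, heB2⟩
  · -- Case α : single A1 vertex, pattern s x s'
    have he1 : e = i0 + 1 := by
      have := honlyA1 (e - 1) (by omega) heA1; omega
    by_cases h2 : ∃ m, e < m ∧ m ≤ p.length ∧ p.getVert m ∈ X1
    · obtain ⟨k1, ⟨hk1e, hk1n, hk1X1⟩, hk1min⟩ := exists_min h2
      have hk1pred : p.getVert (k1 - 1) ∈ X2 := by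
        rcases eq_or_lt_of_le (show e ≤ k1 - 1 by omega) with h | h
        · rw [← h]; exact heX2
        · by_contra hc
          exact hk1min (k1 - 1) (by omega) ⟨h, by omega, htot _ hc⟩
      rcases hentry k1 hk1n hk1X1 hk1pred with ⟨hA, -⟩ | ⟨hk1B1, hk1B2⟩
      · exfalso; have := honlyA1 k1 hk1n hA; omega
      have honlyB1 : ∀ j, j ≤ p.length → p.getVert j ∈ B1 → j = k1 := by
        intro j hj hjB
        have hadj : G.Adj (p.getVert j) (p.getVert (k1 - 1)) := hadjB _ hjB _ hk1B2
        rcases hcons hj (by omega) hadj with h | h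
        · exfalso
          have hjX1 : p.getVert j ∈ X1 := hB1X hjB
          rcases lt_trichotomy j i0 with hlt | heq | hgt
          · exact hX1n2 hjX1 (hmin j hlt)
          · exact Set.disjoint_left.mp hAB1 hx (heq ▸ hjB)
          · have hje : e ≤ j := by omega
            rcases eq_or_lt_of_le hje with he' | hlt'
            · exact hX1n2 hjX1 (he' ▸ heX2)
            · exact (hk1min j (by omega)) ⟨hlt', hj, hjX1⟩
        · omega
      have hk1ltn : k1 < p.length := by
        rcases eq_or_lt_of_le hk1n with h | h
        · exfalso; rw [h, hgv] at hk1X1; exact hX1n2 hk1X1 hv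
        · exact h
      have hFex : ∃ m, k1 < m ∧ m ≤ p.length ∧ p.getVert m ∈ X2 :=
        ⟨p.length, hk1ltn, le_refl _, by rwa [hgv]⟩
      obtain ⟨f, ⟨hfk1, hfn, hfX2⟩, hfmin⟩ := exists_min hFex
      have hfpred : p.getVert (f - 1) ∈ X1 := by
        rcases eq_or_lt_of_le (show k1 ≤ f - 1 by omega) with h | h
        · rw [← h]; exact hk1X1
        · exact htot _ (fun hc => hfmin (f - 1) (by omega) ⟨h, by omega, hc⟩)
      have hfe : f - 1 + 1 = f := by omega
      have hf1 : f = k1 + 1 := by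
        have hex := hexit (f - 1) (by omega) hfpred (by rwa [hfe])
        rw [hfe] at hex
        rcases hex with ⟨hA, -⟩ | ⟨hB, -⟩
        · have := honlyA1 (f - 1) (by omega) hA; omega
        · have := honlyB1 (f - 1) (by omega) hB; omega
      have hk1succ : p.getVert (k1 + 1) ∈ X2 := by rw [← hf1]; exact hfX2
      have hall : ∀ m, m ≤ p.length → p.getVert m ∈ X1 → m = i0 ∨ m = k1 := by
        by_contra hc
        push_neg at hc
        obtain ⟨m0, hm0n, hm0X1, hm0i0, hm0k1⟩ := hc
        have hPex : ∃ m, m ≤ p.length ∧ p.getVert m ∈ X1 ∧ m ≠ i0 ∧ m ≠ k1 :=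
          ⟨m0, hm0n, hm0X1, hm0i0, hm0k1⟩
        obtain ⟨m, ⟨hmn, hmX1, hmi0, hmk1⟩, hmmin⟩ := exists_min hPex
        have hmgt : k1 + 1 < m := by
          rcases lt_trichotomy m i0 with h | h | h
          · exact absurd (hmin m h) (hX1n2 hmX1)
          · exact absurd h hmi0
          · have hme : e ≤ m := by omega
            rcases eq_or_lt_of_le hme with h' | h'
            · exact absurd (h' ▸ heX2) (hX1n2 hmX1)
            · have hge : k1 ≤ m := by
                by_contra hlt
                exact hk1min m (by omega) ⟨h', hmn, hmX1⟩
              rcases eq_or_lt_of_le (show k1 + 1 ≤ m by omega) with h'' | h''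
              · exact absurd (h'' ▸ hk1succ) (hX1n2 hmX1)
              · exact h''
        have hmpred : p.getVert (m - 1) ∈ X2 := by
          by_contra hc2
          exact hmmin (m - 1) (by omega) ⟨by omega, htot _ hc2, by omega, by omega⟩
        rcases hentry m hmn hmX1 hmpred with ⟨hA, -⟩ | ⟨hB, -⟩
        · exact hmi0 (honlyA1 m hmn hA)
        · exact hmk1 (honlyB1 m hmn hB)
      left
      refine ⟨p.getVert i0, hx, p.getVert k1, hk1B1, ?_, ?_⟩
      · intro z hz
        obtain ⟨k, hkz, hkn⟩ := SimpleGraph.Walk.mem_support_iff_exists_getVert.mp hz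
        by_cases hzX2 : z ∈ X2
        · exact Set.mem_union_left _ hzX2
        · have hkX1 : p.getVert k ∈ X1 := htot _ (by rwa [hkz])
          rcases hall k hkn hkX1 with h | h
          · refine Set.mem_union_right _ ?_
            rw [← hkz, h]
            exact Set.mem_insert _ _
          · refine Set.mem_union_right _ ?_
            rw [← hkz, h]
            exact Set.mem_insert_of_mem _ rfl
      · intro _ _ hadj
        exfalso
        rcases hcons hi0 hk1n hadj with h | h <;> omega
    · left
      obtain ⟨b0, hb0⟩ := hB1ne
      have honly : ∀ k, k ≤ p.length → p.getVert k ∈ X1 → k = i0 := by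
        intro k hkn hkX1
        rcases lt_trichotomy k i0 with h | h | h
        · exact absurd (hmin k h) (hX1n2 hkX1)
        · exact h
        · exfalso
          rcases eq_or_lt_of_le (show e ≤ k by omega) with h' | h'
          · exact (hX1n2 hkX1) (h' ▸ heX2)
          · exact h2 ⟨k, h', hkn, hkX1⟩
      refine ⟨p.getVert i0, hx, b0, hb0, ?_, ?_⟩
      · intro z hz
        obtain ⟨k, hkz, hkn⟩ := SimpleGraph.Walk.mem_support_iff_exists_getVert.mp hz
        by_cases hzX2 : z ∈ X2
        · exact Set.mem_union_left _ hzX2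
        · have hkX1 : p.getVert k ∈ X1 := htot _ (by rwa [hkz])
          have hk := honly k hkn hkX1
          refine Set.mem_union_right _ ?_
          rw [← hkz, hk]
          exact Set.mem_insert _ _
      · intro _ hbsup _
        obtain ⟨k, hkz, hkn⟩ := SimpleGraph.Walk.mem_support_iff_exists_getVert.mp hbsup
        have hkX1 : p.getVert k ∈ X1 := by rw [hkz]; exact hB1X hb0
        have hk := honly k hkn hkX1
        rw [hk] at hkz
        exact Set.disjoint_left.mp hAB1 hx (hkz ▸ hb0)
  · -- Case β : proper crossing
    have hei0' : i0 + 2 ≤ e := by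
      rcases eq_or_lt_of_le (show i0 ≤ e - 1 by omega) with h | h
      · exfalso; exact Set.disjoint_left.mp hAB1 (h ▸ hx) heB1
      · omega
    have hC3' : ¬ ∃ m, e < m ∧ m ≤ p.length ∧ p.getVert m ∈ X1 := by
      rintro hP
      obtain ⟨m, ⟨hme, hmn, hmX1⟩, hmmin⟩ := exists_min hP
      have hmpred : p.getVert (m - 1) ∈ X2 := by
        rcases eq_or_lt_of_le (show e ≤ m - 1 by omega) with h | h
        · rw [← h]; exact heX2
        · by_contra hc
          exact hmmin (m - 1) (by omega) ⟨h, by omega, htot _ hc⟩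
      rcases hentry m hmn hmX1 hmpred with ⟨hA, -⟩ | ⟨hB, hBpred⟩
      · have := honlyA1 m hmn hA; omega
      · have hadj : G.Adj (p.getVert (e - 1)) (p.getVert (m - 1)) := hadjB _ heB1 _ hBpred
        have hm1 : m = e + 1 := by
          rcases hcons (show e - 1 ≤ p.length by omega) (show m - 1 ≤ p.length by omega) hadj
            with h | h <;> omega
        have he1n : e + 1 < p.length := by
          rcases eq_or_lt_of_le (show e + 1 ≤ p.length by omega) with h | h
          · exfalso; rw [hm1, h, hgv] at hmX1; exact hX1n2 hmX1 hv
          · exact h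
        have hFex : ∃ m', e + 1 < m' ∧ m' ≤ p.length ∧ p.getVert m' ∈ X2 :=
          ⟨p.length, he1n, le_refl _, by rwa [hgv]⟩
        obtain ⟨f, ⟨hfe, hfn, hfX2⟩, hfmin⟩ := exists_min hFex
        have hfpred : p.getVert (f - 1) ∈ X1 := by
          rcases eq_or_lt_of_le (show e + 1 ≤ f - 1 by omega) with h | h
          · rw [← h, ← hm1]; exact hmX1
          · exact htot _ (fun hc => hfmin (f - 1) (by omega) ⟨h, by omega, hc⟩)
        have hfe' : f - 1 + 1 = f := by omega
        have hex := hexit (f - 1) (by omega) hfpred (by rwa [hfe'])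
        rw [hfe'] at hex
        rcases hex with ⟨hA, -⟩ | ⟨-, hB2f⟩
        · have := honlyA1 (f - 1) (by omega) hA; omega
        · have hadj2 : G.Adj (p.getVert (e - 1)) (p.getVert f) := hadjB _ heB1 _ hB2f
          rcases hcons (show e - 1 ≤ p.length by omega) hfn hadj2 with h | h <;> omega
    have hC3 : ∀ m, e ≤ m → p.getVert m ∈ X2 := by
      intro m hm
      by_cases hmn : m ≤ p.length
      · rcases eq_or_lt_of_le hm with h | h
        · rw [← h]; exact heX2
        · by_contra hc
          exact hC3' ⟨m, h, hmn, htot _ hc⟩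
      · rw [p.getVert_of_length_le (by omega : p.length ≤ m)]
        exact hv
    obtain ⟨w1, q1, r1, hpeq, hq1len, hq1g, hr1g⟩ := walk_split p (i0 - 1) (by omega)
    have hr1len : 0 < r1.length := by
      have h1 := congrArg SimpleGraph.Walk.length hpeq
      rw [SimpleGraph.Walk.length_append] at h1
      omega
    obtain ⟨x, hadj1, q, hr1eq, hqg0⟩ := walk_peel r1 hr1len
    have hqg : ∀ k, q.getVert k = p.getVert (i0 + k) := by
      intro k
      rw [hqg0 k, hr1g (k + 1)]
      congr 1
      omega
    have hqlen : q.length = p.length - i0 := by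
      have h1 := congrArg SimpleGraph.Walk.length hpeq
      have h2 := congrArg SimpleGraph.Walk.length hr1eq
      rw [SimpleGraph.Walk.length_append] at h1
      rw [SimpleGraph.Walk.length_cons] at h2
      omega
    obtain ⟨w2, q2, r2, hqeq, hq2len, hq2g, hr2g⟩ := walk_split q (e - 1 - i0)
      (by rw [hqlen]; omega)
    have hr2len : 0 < r2.length := by
      have h1 := congrArg SimpleGraph.Walk.length hqeq
      rw [SimpleGraph.Walk.length_append] at h1
      omega
    obtain ⟨y, hadj2, q3, hr2eq, hq3g0⟩ := walk_peel r2 hr2len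
    have hq3g : ∀ k, q3.getVert k = p.getVert (e + k) := by
      intro k
      rw [hq3g0 k, hr2g (k + 1), hqg]
      congr 1
      omega
    have hw1 : w1 = p.getVert (i0 - 1) := by
      have h0 := hr1g 0
      rw [SimpleGraph.Walk.getVert_zero, Nat.add_zero] at h0
      exact h0
    have hx_eq : x = p.getVert i0 := by
      have h0 := hqg 0
      rw [SimpleGraph.Walk.getVert_zero, Nat.add_zero] at h0
      exact h0
    have hw2 : w2 = p.getVert (e - 1) := by
      have h0 := hr2g 0
      rw [SimpleGraph.Walk.getVert_zero, Nat.add_zero] at h0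
      rw [h0, hqg]
      congr 1
      omega
    have hy_eq : y = p.getVert e := by
      have h0 := hq3g 0
      rw [SimpleGraph.Walk.getVert_zero, Nat.add_zero] at h0
      exact h0
    right
    refine ⟨x, by rw [hx_eq]; exact hx, w2, by rw [hw2]; exact heB1,
      w1, by rw [hw1]; exact hs, y, by rw [hy_eq]; exact heB2,
      q1, hadj1, q2, hadj2, q3, ?_, ?_, ?_, ?_⟩
    · rw [hpeq, hr1eq, hqeq, hr2eq]
    · intro z hz
      obtain ⟨k, hkz, hkn⟩ := SimpleGraph.Walk.mem_support_iff_exists_getVert.mp hz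
      rw [← hkz, hq1g k]
      exact hmin _ (lt_of_le_of_lt (Nat.min_le_right k (i0 - 1)) (by omega))
    · intro z hz
      obtain ⟨k, hkz, hkn⟩ := SimpleGraph.Walk.mem_support_iff_exists_getVert.mp hz
      rw [← hkz, hq2g k, hqg]
      refine hrun _ (Nat.le_add_right _ _) ?_
      exact lt_of_le_of_lt (Nat.add_le_add_left (Nat.min_le_right _ _) i0) (by omega)
    · intro z hz
      obtain ⟨k, hkz, hkn⟩ := SimpleGraph.Walk.mem_support_iff_exists_getVert.mp hz
      rw [← hkz, hq3g k]
      exact hC3 _ (Nat.le_add_right _ _)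

end PWX

/-- Structure of an induced path with both ends in `X2`, relative to a 2-join. -/
theorem path_with_ends_in_X2 {V : Type*} (G : SimpleGraph V)
    (X1 X2 A1 B1 A2 B2 : Set V)
    (hJ : BSP.IsTwoJoinSplit G X1 X2 A1 B1 A2 B2)
    (u v : V) (hu : u ∈ X2) (hv : v ∈ X2)
    (p : G.Walk u v) (hp : BSP.IsInducedPath G p) :
    (∃ a ∈ A1, ∃ b ∈ B1, (∀ x ∈ p.support, x ∈ X2 ∪ {a, b}) ∧
        (a ∈ p.support → b ∈ p.support → ¬ G.Adj a b)) ∨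
    (∃ a ∈ A1, ∃ b ∈ B1, ∃ a2 ∈ A2, ∃ b2 ∈ B2,
      ∃ (q1 : G.Walk u a2) (h1 : G.Adj a2 a) (q2 : G.Walk a b) (h2 : G.Adj b b2)
        (q3 : G.Walk b2 v),
        p = q1.append (SimpleGraph.Walk.cons h1 (q2.append (SimpleGraph.Walk.cons h2 q3))) ∧
        (∀ x ∈ q1.support, x ∈ X2) ∧ (∀ x ∈ q2.support, x ∈ X1) ∧
        (∀ x ∈ q3.support, x ∈ X2)) ∨
    (∃ a ∈ A1, ∃ b ∈ B1, ∃ a2 ∈ A2, ∃ b2 ∈ B2,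
      ∃ (q1 : G.Walk v a2) (h1 : G.Adj a2 a) (q2 : G.Walk a b) (h2 : G.Adj b b2)
        (q3 : G.Walk b2 u),
        p.reverse =
          q1.append (SimpleGraph.Walk.cons h1 (q2.append (SimpleGraph.Walk.cons h2 q3))) ∧
        (∀ x ∈ q1.support, x ∈ X2) ∧ (∀ x ∈ q2.support, x ∈ X1) ∧
        (∀ x ∈ q3.support, x ∈ X2)) := by
    classical
  have hJc := hJ
  obtain ⟨hdis, hcov, hA1X, hB1X, hA2X, hB2X, hAB1, hAB2, hA1ne, hB1ne, -, -, hadjA, hadjB,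
    hcross⟩ := hJc
  have htot : ∀ x : V, x ∉ X2 → x ∈ X1 := by
    intro x hx2
    have hm : x ∈ X1 ∪ X2 := hcov ▸ Set.mem_univ x
    rw [Set.mem_union] at hm
    tauto
  have hX1n2 : ∀ {x : V}, x ∈ X1 → x ∉ X2 := fun hx1 hx2 => Set.disjoint_left.mp hdis hx1 hx2
  by_cases hX1 : ∃ m, m ≤ p.length ∧ p.getVert m ∈ X1
  · obtain ⟨i0, ⟨hi0n, hi0X1⟩, hi0min⟩ := PWX.exists_min hX1
    have hmin : ∀ m, m < i0 → p.getVert m ∈ X2 := by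
      intro m hm
      by_contra hc
      exact hi0min m hm ⟨by omega, htot _ hc⟩
    have hi0pos : 1 ≤ i0 := by
      by_contra hc
      have h0 : i0 = 0 := by omega
      rw [h0, SimpleGraph.Walk.getVert_zero] at hi0X1
      exact hX1n2 hi0X1 hu
    have hprev : p.getVert (i0 - 1) ∈ X2 := hmin _ (by omega)
    have hadj0 : G.Adj (p.getVert (i0 - 1)) (p.getVert i0) := by
      have := p.adj_getVert_succ (i := i0 - 1) (by omega)
      rwa [show i0 - 1 + 1 = i0 by omega] at this
    rcases hcross _ hi0X1 _ hprev hadj0.symm with ⟨hA1m, hA2m⟩ | ⟨hB1m, hB2m⟩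
    · rcases PWX.sideA hJ hu hv p hp i0 hi0n hmin hA2m hA1m with h | h
      · exact Or.inl h
      · exact Or.inr (Or.inl h)
    · rcases PWX.sideA (PWX.twoJoin_swap hJ) hu hv p hp i0 hi0n hmin hB2m hB1m with h | h
      · left
        obtain ⟨b, hb, a, ha, hsup, hnadj⟩ := h
        refine ⟨a, ha, b, hb, ?_, fun h1 h2 hadj => hnadj h2 h1 hadj.symm⟩
        intro z hz
        rcases hsup z hz with h' | h'
        · exact Set.mem_union_left _ h'
        · refine Set.mem_union_right _ ?_
          simp only [Set.mem_insert_iff, Set.mem_singleton_iff] at h' ⊢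
          tauto
      · right; right
        obtain ⟨bb, hbbB1, aa, haaA1, bb2, hbb2B2, aa2, haa2A2, q1, h1, q2, h2, q3,
          hdec, hs1, hs2, hs3⟩ := h
        refine ⟨aa, haaA1, bb, hbbB1, aa2, haa2A2, bb2, hbb2B2,
          q3.reverse, h2.symm, q2.reverse, h1.symm, q1.reverse, ?_, ?_, ?_, ?_⟩
        · rw [hdec]
          exact PWX.rev_decomp q1 h1 q2 h2 q3
        · intro z hz
          rw [SimpleGraph.Walk.support_reverse, List.mem_reverse] at hz
          exact hs3 z hz
        · intro z hz
          rw [SimpleGraph.Walk.support_reverse, List.mem_reverse] at hz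
          exact hs2 z hz
        · intro z hz
          rw [SimpleGraph.Walk.support_reverse, List.mem_reverse] at hz
          exact hs1 z hz
  · left
    obtain ⟨a0, ha0⟩ := hA1ne
    obtain ⟨b0, hb0⟩ := hB1ne
    refine ⟨a0, ha0, b0, hb0, ?_, ?_⟩
    · intro z hz
      obtain ⟨k, hkz, hkn⟩ := SimpleGraph.Walk.mem_support_iff_exists_getVert.mp hz
      refine Set.mem_union_left _ ?_
      by_contra hc
      exact hX1 ⟨k, hkn, htot _ (by rwa [hkz])⟩
    · intro ha _ _
      obtain ⟨k, hkz, hkn⟩ := SimpleGraph.Walk.mem_support_iff_exists_getVert.mp ha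
      exact hX1 ⟨k, hkn, by rw [hkz]; exact hA1X ha0⟩
end

section
/- Let G be a graph with a non-degenerate 2-join (X1,X2) with split (X1,X2,A1,B1,A2,B2). Then for each i ∈ {1,2} and every vertex v ∈ X_i, there exist induced paths P_a from some a ∈ A_i to v and P_b from some b ∈ B_i to v such that every interior vertex of P_a and of P_b lies in X_i \ (A_i ∪ B_i). -/
open SimpleGraph

universe u

section Aux

open SimpleGraph

variable {V : Type*} {G : SimpleGraph V}

private lemma BSP.edge_mem_of_length_one {x y : V} (w : G.Walk x y) (hl : w.length = 1) :
    s(x, y) ∈ w.edges := by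
  cases w with
  | nil => simp at hl
  | cons h w' =>
    have h0 : w'.length = 0 := by simpa using hl
    obtain rfl := w'.eq_of_length_eq_zero h0
    simp

private lemma BSP.key (G : SimpleGraph V) (X Y A B A' B' : Set V)
    (hdisj : Disjoint X Y) (hcover : X ∪ Y = Set.univ)
    (_hA : A ⊆ X) (hB : B ⊆ X) (hA' : A' ⊆ Y) (hB' : B' ⊆ Y)
    (hA'B' : Disjoint A' B')
    (hA'ne : A'.Nonempty) (hBne : B.Nonempty) (hB'ne : B'.Nonempty)
    (hBB' : ∀ b ∈ B, ∀ b' ∈ B', G.Adj b b')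
    (hcross : ∀ x ∈ X, ∀ y ∈ Y, G.Adj x y → (x ∈ A ∧ y ∈ A') ∨ (x ∈ B ∧ y ∈ B'))
    (hnsc : ¬ BSP.IsSkewCutset G (B ∪ B'))
    (hBnbr : ∀ v ∈ B, ∃ w, w ∈ X \ B ∧ G.Adj v w)
    (v : V) (hv : v ∈ X) :
    ∃ a ∈ A, ∃ p : G.Walk a v, BSP.IsInducedPath G p ∧
      ∀ x, BSP.Interior p x → x ∈ X \ (A ∪ B) := by
  classical
  -- Core claim: every vertex of `X \ B` reaches `A` inside `X \ B`.
  have core : ∀ w ∈ X \ B, ∃ a ∈ A, ∃ p : G.Walk w a, ∀ z ∈ p.support, z ∈ X \ B := by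
    intro w hw
    by_contra hcon
    push_neg at hcon
    set R : Set V := {x | ∃ p : G.Walk w x, ∀ z ∈ p.support, z ∈ X \ B} with hRdef
    have hwR : w ∈ R := ⟨SimpleGraph.Walk.nil, by simpa using hw⟩
    have hRsub : ∀ x ∈ R, x ∈ X \ B := by
      rintro x ⟨p, hp⟩; exact hp x p.end_mem_support
    have hRA : ∀ x ∈ R, x ∉ A := by
      rintro x ⟨p, hp⟩ hxA
      obtain ⟨z, hz1, hz2⟩ := hcon x hxA p
      exact hz2 (hp z hz1)
    have hclosed : ∀ x ∈ R, ∀ y, G.Adj x y → y ∉ B ∪ B' → y ∈ R := by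
      rintro x hxR y hadj hyB
      obtain ⟨p, hp⟩ := hxR
      have hxX : x ∈ X \ B := hRsub x ⟨p, hp⟩
      have hyXY : y ∈ X ∪ Y := by rw [hcover]; exact Set.mem_univ y
      have hyX : y ∈ X := by
        rcases hyXY with h | h
        · exact h
        · rcases hcross x hxX.1 y h hadj with ⟨hxA, _⟩ | ⟨hxB, _⟩
          · exact absurd hxA (hRA x ⟨p, hp⟩)
          · exact absurd hxB hxX.2
      refine ⟨p.concat hadj, ?_⟩
      intro z hz
      rw [SimpleGraph.Walk.support_concat, List.mem_append, List.mem_singleton] at hz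
      rcases hz with hz | rfl
      · exact hp z hz
      · exact ⟨hyX, fun h => hyB (Or.inl h)⟩
    apply hnsc
    obtain ⟨b, hb⟩ := hBne
    obtain ⟨b', hb'⟩ := hB'ne
    obtain ⟨a', ha'⟩ := hA'ne
    have hwnot : w ∈ ((B ∪ B')ᶜ : Set V) := by
      simp only [Set.mem_compl_iff, Set.mem_union]
      rintro (h | h)
      · exact hw.2 h
      · exact Set.disjoint_left.mp hdisj hw.1 (hB' h)
    have ha'not : a' ∈ ((B ∪ B')ᶜ : Set V) := by
      simp only [Set.mem_compl_iff, Set.mem_union]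
      rintro (h | h)
      · exact Set.disjoint_left.mp hdisj (hB h) (hA' ha')
      · exact Set.disjoint_left.mp hA'B' ha' h
    refine ⟨⟨w, hwnot⟩, ⟨b, Or.inl hb⟩, disjoint_compl_left, Set.compl_union_self _, ?_, ?_⟩
    · -- G minus (B ∪ B') is disconnected
      intro hc
      have walkR : ∀ (z1 z2 : ((B ∪ B')ᶜ : Set V))
          (q : (G.induce ((B ∪ B')ᶜ : Set V)).Walk z1 z2), (z1 : V) ∈ R → (z2 : V) ∈ R := by
        intro z1 z2 q
        induction q with
        | nil => exact id
        | @cons zu zm zw h q ih =>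
          intro h1
          exact ih (hclosed _ h1 _ h zm.prop)
      obtain ⟨q⟩ := hc.preconnected ⟨w, hwnot⟩ ⟨a', ha'not⟩
      have h1 : (a' : V) ∈ R := walkR _ _ q hwR
      exact Set.disjoint_left.mp hdisj (hRsub _ h1).1 (hA' ha')
    · -- complement induced on B ∪ B' is disconnected
      intro hc
      have walkB : ∀ (z1 z2 : ((B ∪ B') : Set V))
          (q : ((Gᶜ).induce ((B ∪ B') : Set V)).Walk z1 z2), (z1 : V) ∈ B → (z2 : V) ∈ B := by
        intro z1 z2 q
        induction q with
        | nil => exact id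
        | @cons zu zm zw h q ih =>
          intro h1
          apply ih
          rcases zm.prop with h2 | h2
          · exact h2
          · exact absurd (hBB' _ h1 _ h2) ((SimpleGraph.compl_adj G _ _).mp h).2
      obtain ⟨q⟩ := hc.preconnected ⟨b, Or.inl hb⟩ ⟨b', Or.inr hb'⟩
      have h1 : (b' : V) ∈ B := walkB _ _ q hb
      exact Set.disjoint_left.mp hdisj (hB h1) (hB' hb')
  -- a walk from v to A with support in S
  set S : Set V := (X \ B) ∪ {v} with hSdef
  have reach : ∃ a ∈ A, ∃ p : G.Walk v a, ∀ z ∈ p.support, z ∈ S := by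
    by_cases hvB : v ∈ B
    · obtain ⟨u, hu, hadj⟩ := hBnbr v hvB
      obtain ⟨a, ha, p, hp⟩ := core u hu
      refine ⟨a, ha, SimpleGraph.Walk.cons hadj p, ?_⟩
      intro z hz
      rw [SimpleGraph.Walk.support_cons, List.mem_cons] at hz
      rcases hz with rfl | hz
      · exact Or.inr rfl
      · exact Or.inl (hp z hz)
    · obtain ⟨a, ha, p, hp⟩ := core v ⟨hv, hvB⟩
      exact ⟨a, ha, p, fun z hz => Or.inl (hp z hz)⟩
  obtain ⟨a0, ha0, p0, hp0⟩ := reach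
  have hex : ∃ n, ∃ a, a ∈ A ∧ ∃ p : G.Walk v a, (∀ z ∈ p.support, z ∈ S) ∧ p.length = n :=
    ⟨p0.length, a0, ha0, p0, hp0, rfl⟩
  obtain ⟨a, ha, p, hpS, hpl⟩ := Nat.find_spec hex
  set n := Nat.find hex with hn
  have hmin : ∀ a' ∈ A, ∀ r : G.Walk v a', (∀ z ∈ r.support, z ∈ S) → n ≤ r.length :=
    fun a' ha' r hr => Nat.find_min' hex ⟨a', ha', r, hr, rfl⟩
  set q := p.bypass with hqdef
  have hqp : q.IsPath := p.bypass_isPath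
  have hqS : ∀ z ∈ q.support, z ∈ S := fun z hz => hpS z (p.support_bypass_subset hz)
  have hql : q.length = n := le_antisymm (hpl ▸ p.length_bypass_le) (hmin a ha q hqS)
  -- q is induced
  have hind : BSP.IsInducedWalk G q := by
    intro x hx y hy hadj
    by_contra hedge
    have hxy : x ≠ y := hadj.ne
    have hspec := q.take_spec hx
    have hlen1 : (q.takeUntil x hx).length + (q.dropUntil x hx).length = q.length := by
      conv_rhs => rw [← hspec]
      exact (SimpleGraph.Walk.length_append _ _).symm
    have hy' := hy
    rw [← hspec, SimpleGraph.Walk.mem_support_append_iff] at hy'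
    rcases hy' with hyt | hyd
    · -- y occurs before x
      set t := q.takeUntil x hx with ht
      have hlen2 : (t.takeUntil y hyt).length + (t.dropUntil y hyt).length = t.length := by
        conv_rhs => rw [← t.take_spec hyt]
        exact (SimpleGraph.Walk.length_append _ _).symm
      have h0 : (t.dropUntil y hyt).length ≠ 0 := fun h =>
        hxy (SimpleGraph.Walk.eq_of_length_eq_zero h).symm
      have h1 : (t.dropUntil y hyt).length ≠ 1 := by
        intro h
        have hme := BSP.edge_mem_of_length_one _ h
        rw [Sym2.eq_swap] at hme
        exact hedge (q.edges_takeUntil_subset hx (t.edges_dropUntil_subset hyt hme))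
      set r : G.Walk v a := (t.takeUntil y hyt).append
        (SimpleGraph.Walk.cons hadj.symm (q.dropUntil x hx)) with hr
      have hrS : ∀ z ∈ r.support, z ∈ S := by
        intro z hz
        rw [hr, SimpleGraph.Walk.mem_support_append_iff] at hz
        rcases hz with hz | hz
        · exact hqS z (q.support_takeUntil_subset hx (t.support_takeUntil_subset hyt hz))
        · rw [SimpleGraph.Walk.support_cons, List.mem_cons] at hz
          rcases hz with rfl | hz
          · exact hqS z hy
          · exact hqS z (q.support_dropUntil_subset hx hz)
      have hrlen : r.length = (t.takeUntil y hyt).length + ((q.dropUntil x hx).length + 1) := by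
        rw [hr, SimpleGraph.Walk.length_append, SimpleGraph.Walk.length_cons]
      have hcontra := hmin a ha r hrS
      omega
    · -- y occurs after x
      set d := q.dropUntil x hx with hd
      have hlen2 : (d.takeUntil y hyd).length + (d.dropUntil y hyd).length = d.length := by
        conv_rhs => rw [← d.take_spec hyd]
        exact (SimpleGraph.Walk.length_append _ _).symm
      have h0 : (d.takeUntil y hyd).length ≠ 0 := fun h =>
        hxy (SimpleGraph.Walk.eq_of_length_eq_zero h)
      have h1 : (d.takeUntil y hyd).length ≠ 1 := by
        intro h
        have hme := BSP.edge_mem_of_length_one _ h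
        exact hedge (q.edges_dropUntil_subset hx (d.edges_takeUntil_subset hyd hme))
      set r : G.Walk v a := (q.takeUntil x hx).append
        (SimpleGraph.Walk.cons hadj (d.dropUntil y hyd)) with hr
      have hrS : ∀ z ∈ r.support, z ∈ S := by
        intro z hz
        rw [hr, SimpleGraph.Walk.mem_support_append_iff] at hz
        rcases hz with hz | hz
        · exact hqS z (q.support_takeUntil_subset hx hz)
        · rw [SimpleGraph.Walk.support_cons, List.mem_cons] at hz
          rcases hz with rfl | hz
          · exact hqS z hx
          · exact hqS z (q.support_dropUntil_subset hx (d.support_dropUntil_subset hyd hz))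
      have hrlen : r.length = (q.takeUntil x hx).length + ((d.dropUntil y hyd).length + 1) := by
        rw [hr, SimpleGraph.Walk.length_append, SimpleGraph.Walk.length_cons]
      have hcontra := hmin a ha r hrS
      omega
  -- interior of q avoids A ∪ B and stays in X
  have hintr : ∀ x, BSP.Interior q x → x ∈ X \ (A ∪ B) := by
    rintro x ⟨hxs, hxv, hxa⟩
    have hxS := hqS x hxs
    have hxXB : x ∈ X \ B := by
      rcases hxS with h | h
      · exact h
      · exact absurd (by simpa using h) hxv
    refine ⟨hxXB.1, ?_⟩
    rintro (hxA | hxB)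
    · have hlen1 : (q.takeUntil x hxs).length + (q.dropUntil x hxs).length = q.length := by
        conv_rhs => rw [← q.take_spec hxs]
        exact (SimpleGraph.Walk.length_append _ _).symm
      have h0 : (q.dropUntil x hxs).length ≠ 0 := fun h =>
        hxa (SimpleGraph.Walk.eq_of_length_eq_zero h)
      have hcontra := hmin x hxA (q.takeUntil x hxs)
        (fun z hz => hqS z (q.support_takeUntil_subset hxs hz))
      omega
    · exact hxXB.2 hxB
  refine ⟨a, ha, q.reverse, ⟨hqp.reverse, ?_⟩, ?_⟩
  · intro x hx y hy hadj
    rw [SimpleGraph.Walk.support_reverse, List.mem_reverse] at hx hy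
    rw [SimpleGraph.Walk.edges_reverse, List.mem_reverse]
    exact hind x hx y hy hadj
  · rintro x ⟨hxs, hxa, hxv⟩
    rw [SimpleGraph.Walk.support_reverse, List.mem_reverse] at hxs
    exact hintr x ⟨hxs, hxv, hxa⟩

end Aux

/-- In a graph with a non-degenerate 2-join, every vertex of `X_i` is joined
to `A_i` and to `B_i` by induced paths whose interior lies in `X_i \ (A_i ∪ B_i)`. -/
theorem nondegenerate_two_join_connectivity {V : Type*} (G : SimpleGraph V)
    (X1 X2 A1 B1 A2 B2 : Set V)
    (hJ : BSP.IsTwoJoinSplit G X1 X2 A1 B1 A2 B2)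
    (hnd : ¬ BSP.IsDegenerate G X1 X2 A1 B1 A2 B2) :
    (∀ v ∈ X1,
      (∃ a ∈ A1, ∃ p : G.Walk a v, BSP.IsInducedPath G p ∧
        ∀ x, BSP.Interior p x → x ∈ X1 \ (A1 ∪ B1)) ∧
      (∃ b ∈ B1, ∃ p : G.Walk b v, BSP.IsInducedPath G p ∧
        ∀ x, BSP.Interior p x → x ∈ X1 \ (A1 ∪ B1))) ∧
    (∀ v ∈ X2,
      (∃ a ∈ A2, ∃ p : G.Walk a v, BSP.IsInducedPath G p ∧
        ∀ x, BSP.Interior p x → x ∈ X2 \ (A2 ∪ B2)) ∧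
      (∃ b ∈ B2, ∃ p : G.Walk b v, BSP.IsInducedPath G p ∧
        ∀ x, BSP.Interior p x → x ∈ X2 \ (A2 ∪ B2))) := by
  obtain ⟨hdisj, hcover, hA1, hB1, hA2, hB2, hA1B1, hA2B2, hA1ne, hB1ne, hA2ne, hB2ne,
    hAA, hBB, hcross⟩ := hJ
  unfold BSP.IsDegenerate at hnd
  push_neg at hnd
  obtain ⟨h1, h2, h3, h4, h5, h6, -, -, -, -, -, -, -⟩ := hnd
  have hcover' : X2 ∪ X1 = Set.univ := by rw [Set.union_comm]; exact hcover
  have hcross' : ∀ x ∈ X2, ∀ y ∈ X1, G.Adj x y → (x ∈ A2 ∧ y ∈ A1) ∨ (x ∈ B2 ∧ y ∈ B1) := by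
    intro x hx y hy h
    exact (hcross y hy x hx h.symm).imp (fun ⟨u1, u2⟩ => ⟨u2, u1⟩) (fun ⟨u1, u2⟩ => ⟨u2, u1⟩)
  constructor
  · intro v hv
    constructor
    · exact BSP.key G X1 X2 A1 B1 A2 B2 hdisj hcover hA1 hB1 hA2 hB2 hA2B2
        hA2ne hB1ne hB2ne hBB hcross h6 h2 v hv
    · rw [Set.union_comm A1 B1]
      exact BSP.key G X1 X2 B1 A1 B2 A2 hdisj hcover hB1 hA1 hB2 hA2 hA2B2.symm
        hB2ne hA1ne hA2ne hAA (fun x hx y hy h => (hcross x hx y hy h).symm) h5 h1 v hv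
  · intro v hv
    constructor
    · exact BSP.key G X2 X1 A2 B2 A1 B1 hdisj.symm hcover' hA2 hB2 hA1 hB1 hA1B1
        hA1ne hB2ne hB1ne (fun b hb b' hb' => (hBB b' hb' b hb).symm) hcross'
        (by rw [Set.union_comm]; exact h6) h4 v hv
    · rw [Set.union_comm A2 B2]
      exact BSP.key G X2 X1 B2 A2 B1 A1 hdisj.symm hcover' hB2 hA2 hB1 hA1 hA1B1.symm
        hB1ne hA2ne hA1ne (fun b hb b' hb' => (hAA b' hb' b hb).symm)
        (fun x hx y hy h => (hcross' x hx y hy h).symm)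
        (by rw [Set.union_comm]; exact h5) h3 v hv
end
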